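/- arXiv:math/0307050 — 2 statements merged into one kernel-verified Lean document; each statement's English description precedes it below -/
import Mathlib

section
/- For all n ≥ 0 and all k ≥ 1, |I_n(3412, 4231, δ_{k+2})| = F_{k+1, n+1}, where δ_{k+2} = (k+2)(k+1)…21 is the decreasing permutation of length k+2, and F_{k,n} is the k-generalized Fibonacci number defined by F_{k,n} = 0 for n ≤ 0, F_{k,1} = 1, and F_{k,n} = Σ_{i=1}^{k} F_{k,n−i} for n ≥ 2. -/
/-- `π` (a sequence of length `n` with values in `Fin n`) contains the pattern `σ` of length `k`:
there is a strictly increasing choice of positions on which `π` has the same pairwise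
comparisons as `σ`. -/
def Contains {n k : ℕ} (π : Fin n → Fin n) (σ : Fin k → Fin k) : Prop :=
  ∃ f : Fin k → Fin n, StrictMono f ∧ ∀ a b : Fin k, σ a < σ b ↔ π (f a) < π (f b)

/-- `π` avoids the pattern `σ`. -/
def Avoids {n k : ℕ} (π : Fin n → Fin n) (σ : Fin k → Fin k) : Prop :=
  ¬ Contains π σ

/-- The pattern 3412, written 0-indexed. -/
def pat3412 : Fin 4 → Fin 4 := ![2, 3, 0, 1]

/-- The pattern 4231, written 0-indexed. -/
def pat4231 : Fin 4 → Fin 4 := ![3, 1, 2, 0]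

/-- The `k`-generalized Fibonacci numbers: `F_{k,0} = 0`, `F_{k,1} = 1`, and
`F_{k,n} = Σ_{i=1}^k F_{k,n-i}` for `n ≥ 2` (terms with `n - i ≤ 0` contribute `0`). -/
def genFib (k : ℕ) : ℕ → ℕ
  | 0 => 0
  | 1 => 1
  | n + 2 => ∑ i ∈ (Finset.Icc 1 k).attach, genFib k (n + 2 - (i : ℕ))
decreasing_by
  have := Finset.mem_Icc.mp i.2
  omega

/-! ### ℕ-valued wrapper -/

def natOf {n : ℕ} (π : Fin n → Fin n) : ℕ → ℕ :=
  fun t => if h : t < n then (π ⟨t, h⟩ : ℕ) else 0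

lemma natOf_fin {n : ℕ} (π : Fin n → Fin n) (i : Fin n) :
    natOf π (i : ℕ) = (π i : ℕ) := by
  simp [natOf, i.isLt, Fin.eta]

lemma val_eq_natOf {n : ℕ} (π : Fin n → Fin n) (t : ℕ) (h : t < n) :
    (π ⟨t, h⟩ : ℕ) = natOf π t := by
  simp only [natOf, dif_pos h]

lemma natOf_lt {n : ℕ} (π : Fin n → Fin n) {t : ℕ} (h : t < n) : natOf π t < n := by
  simp only [natOf, dif_pos h]
  exact (π _).isLt

lemma natOf_inv {n : ℕ} {π : Fin n → Fin n} (hinv : Function.Involutive π) {t : ℕ}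
    (h : t < n) : natOf π (natOf π t) = t := by
  simp only [natOf, dif_pos h, dif_pos (π ⟨t, h⟩).isLt, Fin.eta]
  rw [hinv]

lemma natOf_inj {n : ℕ} {π : Fin n → Fin n} (hinv : Function.Involutive π) {a b : ℕ}
    (ha : a < n) (hb : b < n) (h : natOf π a = natOf π b) : a = b := by
  have := natOf_inv hinv ha
  rw [h, natOf_inv hinv hb] at this
  omega

/-! ### Helpers for building containments -/

def quad {n : ℕ} (p0 p1 p2 p3 : Fin n) : Fin 4 → Fin n
  | ⟨0, _⟩ => p0
  | ⟨1, _⟩ => p1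
  | ⟨2, _⟩ => p2
  | ⟨3, _⟩ => p3

lemma contains3412 {n : ℕ} (π : Fin n → Fin n) {a b c d : ℕ}
    (hab : a < b) (hbc : b < c) (hcd : c < d) (hd : d < n)
    (v1 : natOf π c < natOf π d) (v2 : natOf π d < natOf π a) (v3 : natOf π a < natOf π b) :
    Contains π pat3412 := by
  have ha : a < n := by omega
  have hb : b < n := by omega
  have hc : c < n := by omega
  simp only [natOf, dif_pos ha, dif_pos hb, dif_pos hc, dif_pos hd] at v1 v2 v3
  refine ⟨quad ⟨a, ha⟩ ⟨b, hb⟩ ⟨c, hc⟩ ⟨d, hd⟩, ?_, ?_⟩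
  · intro x y hxy
    fin_cases x <;> fin_cases y <;> simp only [quad, Fin.lt_def] at * <;> omega
  · intro x y
    fin_cases x <;> fin_cases y <;> simp only [quad] <;>
      first
        | exact iff_of_true (by decide) (by simp only [Fin.lt_def] at *; omega)
        | exact iff_of_false (by decide) (by simp only [Fin.lt_def, not_lt] at *; omega)

lemma contains4231 {n : ℕ} (π : Fin n → Fin n) {a b c d : ℕ}
    (hab : a < b) (hbc : b < c) (hcd : c < d) (hd : d < n)
    (v1 : natOf π d < natOf π b) (v2 : natOf π b < natOf π c) (v3 : natOf π c < natOf π a) :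
    Contains π pat4231 := by
  have ha : a < n := by omega
  have hb : b < n := by omega
  have hc : c < n := by omega
  simp only [natOf, dif_pos ha, dif_pos hb, dif_pos hc, dif_pos hd] at v1 v2 v3
  refine ⟨quad ⟨a, ha⟩ ⟨b, hb⟩ ⟨c, hc⟩ ⟨d, hd⟩, ?_, ?_⟩
  · intro x y hxy
    fin_cases x <;> fin_cases y <;> simp only [quad, Fin.lt_def] at * <;> omega
  · intro x y
    fin_cases x <;> fin_cases y <;> simp only [quad] <;>
      first
        | exact iff_of_true (by decide) (by simp only [Fin.lt_def] at *; omega)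
        | exact iff_of_false (by decide) (by simp only [Fin.lt_def, not_lt] at *; omega)

lemma containsRev {n q : ℕ} (π : Fin n → Fin n) (g : Fin q → Fin n)
    (hmono : StrictMono g) (hdec : ∀ a b : Fin q, a < b → π (g b) < π (g a)) :
    Contains π (Fin.rev : Fin q → Fin q) := by
  refine ⟨g, hmono, ?_⟩
  intro a b
  rw [Fin.rev_lt_rev]
  constructor
  · exact fun h => hdec b a h
  · intro h
    rcases lt_trichotomy a b with h' | rfl | h'
    · exact absurd (hdec a b h') (by simp only [not_lt]; exact le_of_lt h)
    · exact absurd h (lt_irrefl _)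
    · exact h'

lemma strictMono_le_apply {q n : ℕ} {f : Fin q → Fin n} (hf : StrictMono f) (i : Fin q) :
    (i : ℕ) ≤ (f i : ℕ) := by
  cases q with
  | zero => exact i.elim0
  | succ q =>
    induction i using Fin.induction with
    | zero => exact Nat.zero_le _
    | succ i ih =>
      have := hf (Fin.castSucc_lt_succ : Fin.castSucc i < i.succ)
      simp only [Fin.lt_def, Fin.coe_castSucc, Fin.val_succ] at *
      omega

/-! ### The key structure lemma -/

section Structure

variable {n : ℕ} {π : Fin n → Fin n}

/-- In an involution avoiding 3412 and 4231, the initial block is decreasing: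
`π i = π 0 - i` for `i ≤ π 0`. -/
lemma block_struct (hinv : Function.Involutive π)
    (h1 : Avoids π pat3412) (h2 : Avoids π pat4231) (h0 : 0 < n) :
    ∀ i : ℕ, i ≤ natOf π 0 → natOf π i = natOf π 0 - i := by
  intro i
  induction i using Nat.strong_induction_on with
  | _ i IH =>
  intro him
  have hmn : natOf π 0 < n := natOf_lt π h0
  set m := natOf π 0 with hmdef
  have hi : i < n := by omega
  rcases Nat.eq_zero_or_pos i with rfl | hipos
  · omega
  have hm0 : natOf π m = 0 := by rw [hmdef, natOf_inv hinv h0]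
  have hππi : natOf π (natOf π i) = i := natOf_inv hinv hi
  by_cases hcase : m - i < i
  · -- mirror case: follows from the involution
    have h1' := IH (m - i) hcase (by omega)
    have : natOf π (natOf π (m - i)) = m - i := natOf_inv hinv (by omega)
    rw [h1'] at this
    have e : m - (m - i) = i := by omega
    rw [e] at this
    omega
  · push_neg at hcase
    have hi_lt_m : i < m := by omega
    have IH2 : ∀ t, t < i → natOf π (m - t) = t := by
      intro t ht
      have h' := IH t ht (by omega)
      have := natOf_inv hinv (show t < n by omega)
      rw [h'] at this
      exact this
    -- Step 1 : π i ≤ m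
    have hpm : natOf π i ≤ m := by
      by_contra hpm
      push_neg at hpm
      refine h1 (contains3412 π hipos hi_lt_m hpm (natOf_lt π hi) ?_ ?_ ?_) <;> omega
    -- Step 2 : i ≤ π i
    have hip : i ≤ natOf π i := by
      by_contra h'
      push_neg at h'
      have := IH (natOf π i) h' (by omega)
      omega
    -- Step 3 : π i ≤ m - i
    have hple : natOf π i ≤ m - i := by
      by_contra h'
      push_neg at h'
      have ht : m - natOf π i < i := by omega
      have := IH2 (m - natOf π i) ht
      have e : m - (m - natOf π i) = natOf π i := by omega
      rw [e] at this
      have := natOf_inj hinv (by omega : m - natOf π i < n) hi (by omega)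
      omega
    rcases eq_or_lt_of_le hple with heq | hlt
    · exact heq
    · exfalso
      -- j = position of value m - i
      set j := natOf π (m - i) with hjdef
      have hjn : j < n := natOf_lt π (by omega)
      have hππmi : natOf π j = m - i := by rw [hjdef, natOf_inv hinv (by omega)]
      -- j ∉ [0, i)
      have hj1 : ¬ j < i := by
        intro h'
        have := IH j h' (by omega)
        omega
      -- j ≠ i
      have hj2 : j ≠ i := by
        intro h'
        rw [h'] at hππmi
        omega
      -- j ≤ m  (else 3412 at 0, m-i, m, j)
      have hj3 : j ≤ m := by
        by_contra h'
        push_neg at h'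
        refine h1 (contains3412 π (show 0 < m - i by omega) (show m - i < m by omega) h' hjn
          ?_ ?_ ?_) <;> omega
      -- j ∉ (m - i, m]
      have hj4 : j ≤ m - i := by
        by_contra h'
        push_neg at h'
        have := IH2 (m - j) (by omega)
        have e : m - (m - j) = j := by omega
        rw [e] at this
        omega
      have hij : i < j := by omega
      -- 4231 at positions i-1 < i < j < m-(i-1)
      have hv0 := IH (i - 1) (by omega) (by omega)
      have hv3 := IH2 (i - 1) (by omega)
      refine h2 (contains4231 π (show i - 1 < i by omega) hij
        (show j < m - (i - 1) by omega) (show m - (i - 1) < n by omega) ?_ ?_ ?_) <;> omega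

/-- Positions after the first block stay after the first block. -/
lemma high_struct (hinv : Function.Involutive π)
    (h1 : Avoids π pat3412) (h2 : Avoids π pat4231) (h0 : 0 < n)
    {i : ℕ} (hi : i < n) (hgt : natOf π 0 < i) : natOf π 0 < natOf π i := by
  by_contra h'
  push_neg at h'
  have := block_struct hinv h1 h2 h0 (natOf π i) h'
  have := natOf_inv hinv hi
  omega

/-- The first block has length at most `k+1` when `π` avoids the decreasing pattern of
length `k+2`. -/
lemma firstLen_le {k : ℕ} (hinv : Function.Involutive π)
    (h1 : Avoids π pat3412) (h2 : Avoids π pat4231)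
    (h3 : Avoids π (Fin.rev : Fin (k + 2) → Fin (k + 2))) (h0 : 0 < n) :
    natOf π 0 + 1 ≤ k + 1 := by
  by_contra h'
  push_neg at h'
  have hm : k + 1 ≤ natOf π 0 := by omega
  have hmn : natOf π 0 < n := natOf_lt π h0
  refine h3 (containsRev π (fun a => ⟨(a : ℕ), by have := a.isLt; omega⟩) ?_ ?_)
  · intro a b hab
    exact hab
  · intro a b hab
    have ha := a.isLt
    have hb := b.isLt
    rw [Fin.lt_def, val_eq_natOf, val_eq_natOf]
    have ea := block_struct hinv h1 h2 h0 (a : ℕ) (by omega)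
    have eb := block_struct hinv h1 h2 h0 (b : ℕ) (by omega)
    rw [Fin.lt_def] at hab
    omega
end Structure

/-! ### Goodness -/

def Good (k n : ℕ) (π : Fin n → Fin n) : Prop :=
  Function.Involutive π ∧ Avoids π pat3412 ∧ Avoids π pat4231 ∧
    Avoids π (Fin.rev : Fin (k + 2) → Fin (k + 2))

/-! ### Extension and restriction -/

section ExtRestr

variable {n ℓ : ℕ}

def extFun (hℓ : 1 ≤ ℓ) (hn : ℓ ≤ n) (τ : Fin (n - ℓ) → Fin (n - ℓ)) : Fin n → Fin n :=
  fun i =>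
    if h : (i : ℕ) < ℓ then ⟨ℓ - 1 - (i : ℕ), by omega⟩
    else ⟨(τ ⟨(i : ℕ) - ℓ, by have := i.isLt; omega⟩ : ℕ) + ℓ, by
      have := (τ ⟨(i : ℕ) - ℓ, by have := i.isLt; omega⟩).isLt; omega⟩

lemma extFun_low (hℓ : 1 ≤ ℓ) (hn : ℓ ≤ n) (τ : Fin (n - ℓ) → Fin (n - ℓ)) {t : ℕ}
    (htn : t < n) (h : t < ℓ) : natOf (extFun hℓ hn τ) t = ℓ - 1 - t := by
  rw [← val_eq_natOf _ t htn]
  simp only [extFun, dif_pos h]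

lemma extFun_high (hℓ : 1 ≤ ℓ) (hn : ℓ ≤ n) (τ : Fin (n - ℓ) → Fin (n - ℓ)) {t : ℕ}
    (htn : t < n) (h : ℓ ≤ t) :
    natOf (extFun hℓ hn τ) t = natOf τ (t - ℓ) + ℓ := by
  rw [← val_eq_natOf _ t htn]
  simp only [extFun, dif_neg (not_lt.2 h)]
  rw [val_eq_natOf]

def restrFun (hn : ℓ ≤ n) (π : Fin n → Fin n) : Fin (n - ℓ) → Fin (n - ℓ) :=
  fun j => ⟨(π ⟨(j : ℕ) + ℓ, by have := j.isLt; omega⟩ : ℕ) - ℓ, by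
    have := j.isLt
    have := (π ⟨(j : ℕ) + ℓ, by have := j.isLt; omega⟩).isLt
    omega⟩

lemma restrFun_val (hn : ℓ ≤ n) (π : Fin n → Fin n) {t : ℕ} (ht : t < n - ℓ) :
    natOf (restrFun hn π) t = natOf π (t + ℓ) - ℓ := by
  rw [← val_eq_natOf _ t ht]
  simp only [restrFun]
  rw [val_eq_natOf]

/-- Transfer a containment from the restricted map up to the big map,
given the tail relation. -/
lemma transfer_up {q : ℕ} (hn : ℓ ≤ n) (π : Fin n → Fin n) (τ : Fin (n - ℓ) → Fin (n - ℓ))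
    (hrel : ∀ t : ℕ, t < n - ℓ → natOf π (t + ℓ) = natOf τ t + ℓ)
    (σ : Fin q → Fin q) (h : Contains τ σ) : Contains π σ := by
  obtain ⟨f, hf, hiff⟩ := h
  refine ⟨fun a => ⟨(f a : ℕ) + ℓ, by have := (f a).isLt; omega⟩, ?_, ?_⟩
  · intro a b hab
    have := hf hab
    rw [Fin.lt_def] at *
    simp only
    omega
  · intro a b
    rw [hiff a b, Fin.lt_def, Fin.lt_def]
    beta_reduce
    rw [val_eq_natOf, val_eq_natOf, val_eq_natOf, val_eq_natOf,
      hrel _ (f a).isLt, hrel _ (f b).isLt]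
    omega

/-- Transfer a containment supported after position `ℓ` down to the restricted map. -/
lemma transfer_down {q : ℕ} (hn : ℓ ≤ n) (π : Fin n → Fin n) (τ : Fin (n - ℓ) → Fin (n - ℓ))
    (hrel : ∀ t : ℕ, t < n - ℓ → natOf π (t + ℓ) = natOf τ t + ℓ)
    (σ : Fin q → Fin q) (f : Fin q → Fin n) (hf : StrictMono f)
    (hiff : ∀ a b : Fin q, σ a < σ b ↔ π (f a) < π (f b))
    (hall : ∀ a, ℓ ≤ (f a : ℕ)) : Contains τ σ := by
  refine ⟨fun a => ⟨(f a : ℕ) - ℓ, by have := (f a).isLt; have := hall a; omega⟩, ?_, ?_⟩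
  · intro a b hab
    have := hf hab
    have := hall a
    rw [Fin.lt_def] at *
    simp only
    omega
  · intro a b
    rw [hiff a b, Fin.lt_def, Fin.lt_def]
    beta_reduce
    have ea : ((f a : ℕ) - ℓ) + ℓ = (f a : ℕ) := by have := hall a; omega
    have eb : ((f b : ℕ) - ℓ) + ℓ = (f b : ℕ) := by have := hall b; omega
    have ha := hrel ((f a : ℕ) - ℓ) (by have := (f a).isLt; have := hall a; omega)
    have hb := hrel ((f b : ℕ) - ℓ) (by have := (f b).isLt; have := hall b; omega)
    rw [ea] at ha
    rw [eb] at hb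
    rw [val_eq_natOf, val_eq_natOf, val_eq_natOf, val_eq_natOf, ha, hb]
    omega

lemma extFun_rel (hℓ : 1 ≤ ℓ) (hn : ℓ ≤ n) (τ : Fin (n - ℓ) → Fin (n - ℓ)) :
    ∀ t : ℕ, t < n - ℓ → natOf (extFun hℓ hn τ) (t + ℓ) = natOf τ t + ℓ := by
  intro t ht
  rw [extFun_high hℓ hn τ (by omega) (by omega)]
  congr 2
  omega

/-- The extension of a good map is good. -/
lemma extFun_good {k : ℕ} (hℓ : 1 ≤ ℓ) (hℓk : ℓ ≤ k + 1) (hn : ℓ ≤ n)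
    (τ : Fin (n - ℓ) → Fin (n - ℓ)) (hτ : Good k (n - ℓ) τ) : Good k n (extFun hℓ hn τ) := by
  obtain ⟨hinv, h1, h2, h3⟩ := hτ
  set π := extFun hℓ hn τ with hπ
  have hlow : ∀ t : ℕ, t < n → t < ℓ → natOf π t = ℓ - 1 - t := fun t htn h =>
    extFun_low hℓ hn τ htn h
  have hhigh : ∀ t : ℕ, t < n → ℓ ≤ t → natOf π t = natOf τ (t - ℓ) + ℓ :=
    fun t htn h => extFun_high hℓ hn τ htn h
  have hrel := extFun_rel hℓ hn τ
  have hge : ∀ t : ℕ, t < n → ℓ ≤ t → ℓ ≤ natOf π t := by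
    intro t htn h
    rw [hhigh t htn h]
    omega
  refine ⟨?_, ?_, ?_, ?_⟩
  · -- involutive
    intro i
    have hi := i.isLt
    apply Fin.ext
    rw [← natOf_fin, ← natOf_fin]
    by_cases h : (i : ℕ) < ℓ
    · rw [hlow (i : ℕ) hi h, hlow (ℓ - 1 - (i : ℕ)) (by omega) (by omega)]
      omega
    · push_neg at h
      rw [hhigh (i : ℕ) hi h]
      have htlt : (i : ℕ) - ℓ < n - ℓ := by omega
      have := natOf_lt τ htlt
      rw [hhigh (natOf τ ((i : ℕ) - ℓ) + ℓ) (by omega) (by omega)]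
      rw [Nat.add_sub_cancel]
      rw [natOf_inv hinv htlt]
      omega
  · -- avoids 3412
    rintro ⟨f, hf, hiff⟩
    have v02 : π (f 2) < π (f 0) := (hiff 2 0).1 (by decide)
    have v01 : π (f 0) < π (f 1) := (hiff 0 1).1 (by decide)
    by_cases hc : ℓ ≤ (f 0 : ℕ)
    · refine h1 (transfer_down hn π τ hrel pat3412 f hf hiff ?_)
      intro a
      calc ℓ ≤ (f 0 : ℕ) := hc
        _ ≤ (f a : ℕ) := by
          rcases eq_or_lt_of_le (Fin.zero_le a) with rfl | h'
          · exact le_refl _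
          · exact le_of_lt (hf h')
    · push_neg at hc
      by_cases hc1 : (f 1 : ℕ) < ℓ
      · -- two block positions are increasing in value: impossible
        have h01 := hf (show (0 : Fin 4) < 1 by decide)
        rw [Fin.lt_def] at h01 v01
        rw [val_eq_natOf, val_eq_natOf] at v01
        have := hlow (f 0 : ℕ) (f 0).isLt hc
        have := hlow (f 1 : ℕ) (f 1).isLt hc1
        omega
      · push_neg at hc1
        have h12 := hf (show (1 : Fin 4) < 2 by decide)
        rw [Fin.lt_def] at h12 v02
        rw [val_eq_natOf, val_eq_natOf] at v02
        have e0 := hlow (f 0 : ℕ) (f 0).isLt hc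
        have e2 := hge (f 2 : ℕ) (f 2).isLt (by omega)
        omega
  · -- avoids 4231
    rintro ⟨f, hf, hiff⟩
    have v12 : π (f 1) < π (f 2) := (hiff 1 2).1 (by decide)
    have v20 : π (f 2) < π (f 0) := (hiff 2 0).1 (by decide)
    have v31 : π (f 3) < π (f 1) := (hiff 3 1).1 (by decide)
    by_cases hc : ℓ ≤ (f 0 : ℕ)
    · refine h2 (transfer_down hn π τ hrel pat4231 f hf hiff ?_)
      intro a
      calc ℓ ≤ (f 0 : ℕ) := hc
        _ ≤ (f a : ℕ) := by
          rcases eq_or_lt_of_le (Fin.zero_le a) with rfl | h'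
          · exact le_refl _
          · exact le_of_lt (hf h')
    · push_neg at hc
      -- all values < ℓ, hence all positions < ℓ, and the block is decreasing: contradiction
      have e0 := hlow (f 0 : ℕ) (f 0).isLt hc
      rw [Fin.lt_def] at v12 v20 v31
      rw [val_eq_natOf, val_eq_natOf] at v12 v20 v31
      have h12 := hf (show (1 : Fin 4) < 2 by decide)
      rw [Fin.lt_def] at h12
      have hp1 : (f 1 : ℕ) < ℓ := by
        by_contra hx
        push_neg at hx
        have := hge (f 1 : ℕ) (f 1).isLt hx
        omega
      have hp2 : (f 2 : ℕ) < ℓ := by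
        by_contra hx
        push_neg at hx
        have := hge (f 2 : ℕ) (f 2).isLt hx
        omega
      have e1 := hlow (f 1 : ℕ) (f 1).isLt hp1
      have e2 := hlow (f 2 : ℕ) (f 2).isLt hp2
      omega
  · -- avoids the decreasing pattern of length k+2
    rintro ⟨f, hf, hiff⟩
    have hdec : ∀ a b : Fin (k + 2), a < b → (π (f b) : ℕ) < π (f a) := by
      intro a b hab
      have := (hiff b a).1 (by rw [Fin.rev_lt_rev]; exact hab)
      rw [Fin.lt_def] at this
      exact this
    by_cases hc : ℓ ≤ (f 0 : ℕ)
    · refine h3 (transfer_down hn π τ hrel _ f hf hiff ?_)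
      intro a
      calc ℓ ≤ (f 0 : ℕ) := hc
        _ ≤ (f a : ℕ) := by
          rcases eq_or_lt_of_le (Fin.zero_le a) with rfl | h'
          · exact le_refl _
          · exact le_of_lt (hf h')
    · push_neg at hc
      -- f last must be in the first block, but the first block has only ℓ ≤ k+1 positions
      set lst : Fin (k + 2) := Fin.last (k + 1) with hlst
      have h0l : (0 : Fin (k + 2)) < lst := by
        rw [Fin.lt_def]
        simp [hlst]
      have hvlast : (π (f lst) : ℕ) < π (f 0) := hdec 0 lst h0l
      have e0 := hlow (f 0 : ℕ) (f 0).isLt hc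
      have hplast : (f lst : ℕ) < ℓ := by
        by_contra hx
        push_neg at hx
        have := hge (f lst : ℕ) (f lst).isLt hx
        rw [val_eq_natOf, val_eq_natOf] at hvlast
        omega
      have := strictMono_le_apply hf lst
      have : (k + 1 : ℕ) ≤ (f lst : ℕ) := by
        simpa [hlst] using this
      omega

end ExtRestr

/-! ### The fiber equivalence -/

section Fiber

variable {k n ℓ : ℕ}

lemma good_firstLen_le {π : Fin n → Fin n} (hg : Good k n π) (hn : 0 < n) :
    natOf π 0 + 1 ≤ k + 1 :=
  firstLen_le hg.1 hg.2.1 hg.2.2.1 hg.2.2.2 hn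

lemma restr_rel (hn : 0 < n) {π : Fin n → Fin n} (hg : Good k n π)
    (hfl : natOf π 0 + 1 = ℓ) (hℓn : ℓ ≤ n) :
    ∀ t : ℕ, t < n - ℓ → natOf π (t + ℓ) = natOf (restrFun hℓn π) t + ℓ := by
  intro t ht
  rw [restrFun_val hℓn π ht]
  have hgt : natOf π 0 < natOf π (t + ℓ) :=
    high_struct hg.1 hg.2.1 hg.2.2.1 hn (by omega) (by omega)
  omega

lemma restr_good (hn : 0 < n) {π : Fin n → Fin n} (hg : Good k n π)
    (hfl : natOf π 0 + 1 = ℓ) (hℓn : ℓ ≤ n) : Good k (n - ℓ) (restrFun hℓn π) := by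
  obtain ⟨hinv, h1, h2, h3⟩ := hg
  have hrel := restr_rel hn ⟨hinv, h1, h2, h3⟩ hfl hℓn
  refine ⟨?_, ?_, ?_, ?_⟩
  · intro j
    have hj := j.isLt
    apply Fin.ext
    rw [← natOf_fin, ← natOf_fin]
    have e1 := restrFun_val hℓn π (t := (j : ℕ)) hj
    have hlt : natOf (restrFun hℓn π) (j : ℕ) < n - ℓ := natOf_lt _ hj
    have e2 := restrFun_val hℓn π hlt
    have h4 := hrel (j : ℕ) hj
    have h5 := hrel _ hlt
    have e3 : natOf (restrFun hℓn π) (j : ℕ) + ℓ = natOf π ((j : ℕ) + ℓ) := by omega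
    rw [e2, e3, natOf_inv hinv (by omega)]
    omega
  · exact fun hc => h1 (transfer_up hℓn π _ hrel pat3412 hc)
  · exact fun hc => h2 (transfer_up hℓn π _ hrel pat4231 hc)
  · exact fun hc => h3 (transfer_up hℓn π _ hrel _ hc)

lemma ext_restr_eq (hn : 0 < n) {π : Fin n → Fin n} (hg : Good k n π)
    (hfl : natOf π 0 + 1 = ℓ) (hℓ1 : 1 ≤ ℓ) (hℓn : ℓ ≤ n) :
    extFun hℓ1 hℓn (restrFun hℓn π) = π := by
  obtain ⟨hinv, h1, h2, h3⟩ := hg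
  have hrel := restr_rel hn ⟨hinv, h1, h2, h3⟩ hfl hℓn
  funext i
  have hi := i.isLt
  apply Fin.ext
  rw [← natOf_fin, ← natOf_fin]
  by_cases h : (i : ℕ) < ℓ
  · rw [extFun_low hℓ1 hℓn _ hi h]
    have := block_struct hinv h1 h2 hn (i : ℕ) (by omega)
    omega
  · push_neg at h
    rw [extFun_high hℓ1 hℓn _ hi h]
    have h4 := hrel ((i : ℕ) - ℓ) (by omega)
    have e : (i : ℕ) - ℓ + ℓ = (i : ℕ) := by omega
    rw [e] at h4
    omega

lemma restr_ext_eq (hℓ1 : 1 ≤ ℓ) (hℓn : ℓ ≤ n) (τ : Fin (n - ℓ) → Fin (n - ℓ)) :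
    restrFun hℓn (extFun hℓ1 hℓn τ) = τ := by
  funext j
  have hj := j.isLt
  apply Fin.ext
  rw [← natOf_fin, ← natOf_fin]
  rw [restrFun_val hℓn _ hj, extFun_high hℓ1 hℓn τ (by omega) (by omega)]
  have e : (j : ℕ) + ℓ - ℓ = (j : ℕ) := by omega
  rw [e]
  omega

lemma ext_fl (hn : 0 < n) (hℓ1 : 1 ≤ ℓ) (hℓn : ℓ ≤ n) (τ : Fin (n - ℓ) → Fin (n - ℓ)) :
    natOf (extFun hℓ1 hℓn τ) 0 + 1 = ℓ := by
  rw [extFun_low hℓ1 hℓn τ hn (by omega)]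
  omega

/-- The fiber of first-block-length `ℓ` is equivalent to good maps on `n - ℓ`. -/
noncomputable def fiberEquiv (hn : 0 < n) (hℓ1 : 1 ≤ ℓ) (hℓn : ℓ ≤ n)
    (hℓk : ℓ ≤ k + 1) :
    {π : {π : Fin n → Fin n // Good k n π} // natOf π.1 0 + 1 = ℓ} ≃
      {τ : Fin (n - ℓ) → Fin (n - ℓ) // Good k (n - ℓ) τ} where
  toFun π := ⟨restrFun hℓn π.1.1, restr_good hn π.1.2 π.2 hℓn⟩
  invFun τ := ⟨⟨extFun hℓ1 hℓn τ.1, extFun_good hℓ1 hℓk hℓn τ.1 τ.2⟩,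
    ext_fl hn hℓ1 hℓn τ.1⟩
  left_inv := by
    rintro ⟨⟨π, hg⟩, hfl⟩
    apply Subtype.ext
    apply Subtype.ext
    exact ext_restr_eq hn hg hfl hℓ1 hℓn
  right_inv := by
    rintro ⟨τ, hg⟩
    apply Subtype.ext
    exact restr_ext_eq hℓ1 hℓn τ

end Fiber

/-! ### Counting -/

lemma card_rec (k n : ℕ) (hn : 0 < n) :
    Nat.card {π : Fin n → Fin n // Good k n π} =
      ∑ ℓ ∈ Finset.Icc 1 (min n (k + 1)),
        Nat.card {τ : Fin (n - ℓ) → Fin (n - ℓ) // Good k (n - ℓ) τ} := by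
  classical
  set s := Finset.Icc 1 (min n (k + 1)) with hs
  have hF : ∀ π : {π : Fin n → Fin n // Good k n π}, natOf π.1 0 + 1 ∈ s := by
    intro π
    have h1 := natOf_lt π.1 hn
    have h2 := good_firstLen_le π.2 hn
    rw [hs, Finset.mem_Icc]
    omega
  set F : {π : Fin n → Fin n // Good k n π} → ↥s := fun π => ⟨natOf π.1 0 + 1, hF π⟩
    with hFdef
  have e1 : {π : Fin n → Fin n // Good k n π} ≃ Σ ℓ : ↥s, {π // F π = ℓ} :=
    (Equiv.sigmaFiberEquiv F).symm
  haveI : Fintype {π : Fin n → Fin n // Good k n π} := Fintype.ofFinite _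
  haveI : ∀ ℓ : ↥s, Fintype {π // F π = ℓ} := fun ℓ => Fintype.ofFinite _
  rw [Nat.card_congr e1, Nat.card_eq_fintype_card, Fintype.card_sigma]
  rw [← Finset.sum_coe_sort s
    (fun ℓ => Nat.card {τ : Fin (n - ℓ) → Fin (n - ℓ) // Good k (n - ℓ) τ})]
  apply Finset.sum_congr rfl
  intro ℓ _
  have hmem : 1 ≤ (ℓ : ℕ) ∧ (ℓ : ℕ) ≤ min n (k + 1) := Finset.mem_Icc.mp ℓ.2
  have hmem2 : (ℓ : ℕ) ≤ n ∧ (ℓ : ℕ) ≤ k + 1 := le_min_iff.mp hmem.2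
  have e2 : {π // F π = ℓ} ≃ {π : {π : Fin n → Fin n // Good k n π} // natOf π.1 0 + 1 = ↑ℓ} :=
    Equiv.subtypeEquivRight (by
      intro π
      rw [hFdef]
      constructor
      · intro h
        exact congrArg Subtype.val h
      · intro h
        exact Subtype.ext h)
  have e3 := fiberEquiv (k := k) (n := n) (ℓ := (ℓ : ℕ)) hn (by omega)
    (by omega) (by omega)
  exact Nat.card_eq_fintype_card.symm.trans (Nat.card_congr (e2.trans e3))

lemma card_zero (k : ℕ) : Nat.card {π : Fin 0 → Fin 0 // Good k 0 π} = 1 := by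
  have hgood : Good k 0 (fun i : Fin 0 => i) := by
    refine ⟨fun i => i.elim0, ?_, ?_, ?_⟩
    · rintro ⟨f, -, -⟩
      exact (f ⟨0, by omega⟩).elim0
    · rintro ⟨f, -, -⟩
      exact (f ⟨0, by omega⟩).elim0
    · rintro ⟨f, -, -⟩
      exact (f ⟨0, by omega⟩).elim0
  haveI : Unique {π : Fin 0 → Fin 0 // Good k 0 π} :=
    { default := ⟨fun i => i, hgood⟩
      uniq := by
        rintro ⟨π, -⟩
        apply Subtype.ext
        funext i
        exact i.elim0 }
  exact Nat.card_unique

lemma main_count (k : ℕ) (hk : 1 ≤ k) :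
    ∀ n, Nat.card {π : Fin n → Fin n // Good k n π} = genFib (k + 1) (n + 1) := by
  intro n
  induction n using Nat.strong_induction_on with
  | _ n IH =>
  rcases Nat.eq_zero_or_pos n with rfl | hn
  · rw [card_zero k]
    simp [genFib]
  · rw [card_rec k n hn]
    have hrec : genFib (k + 1) (n + 1) = ∑ i ∈ Finset.Icc 1 (k + 1), genFib (k + 1) (n + 1 - i) := by
      obtain ⟨n', rfl⟩ : ∃ n', n = n' + 1 := ⟨n - 1, by omega⟩
      rw [show n' + 1 + 1 = n' + 2 from rfl, genFib]
      rw [← Finset.sum_attach (Finset.Icc 1 (k + 1)) (fun i => genFib (k + 1) (n' + 2 - i))]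
    have hsub : ∑ i ∈ Finset.Icc 1 (min n (k + 1)), genFib (k + 1) (n + 1 - i) =
        ∑ i ∈ Finset.Icc 1 (k + 1), genFib (k + 1) (n + 1 - i) := by
      apply Finset.sum_subset
      · apply Finset.Icc_subset_Icc_right
        exact min_le_right n (k + 1)
      · intro x hx hx'
        rw [Finset.mem_Icc] at hx
        have : ¬ x ∈ Finset.Icc 1 (min n (k + 1)) := hx'
        rw [Finset.mem_Icc] at this
        have hxn : n + 1 - x = 0 := by omega
        rw [hxn]
        simp [genFib]
    rw [hrec, ← hsub]
    apply Finset.sum_congr rfl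
    intro ℓ hℓ
    rw [Finset.mem_Icc] at hℓ
    have h1 : n - ℓ < n := by omega
    rw [IH (n - ℓ) h1]
    congr 1
    omega

/-- for all `n ≥ 0` and `k ≥ 1`,
`|I_n(3412, 4231, (k+2)(k+1)…21)| = F_{k+1, n+1}`. -/
theorem stmt15 (n k : ℕ) (hk : 1 ≤ k) :
    Nat.card {π : Fin n → Fin n //
      Function.Involutive π ∧ Avoids π pat3412 ∧ Avoids π pat4231 ∧
        Avoids π (Fin.rev : Fin (k + 2) → Fin (k + 2))} =
    genFib (k + 1) (n + 1) := by
  exact main_count k hk n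
end

section
/- Let π be a permutation of length m ≥ 2 that is complete (for no k with 1 ≤ k < m do the first k entries of π form the set {1,…,k}), with π(1) ≠ m and π(m) ≠ 1. Then I_n(3412, π) = I_n(3412) for all n ≥ 0; that is, every involution that avoids 3412 also avoids π. -/
def pat2413 : Fin 4 → Fin 4 := ![1, 3, 0, 2]
def pat3142 : Fin 4 → Fin 4 := ![2, 0, 3, 1]

lemma fin4cases : ∀ a : Fin 4, a = 0 ∨ a = 1 ∨ a = 2 ∨ a = 3 := by decide

lemma strictMono_vec4 {α} [Preorder α] {p1 p2 p3 p4 : α} (h12 : p1<p2) (h23 : p2<p3)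
    (h34 : p3<p4) : StrictMono ![p1,p2,p3,p4] := by
  intro x y hxy
  fin_cases x <;> fin_cases y <;>
    simp only [Matrix.cons_val_zero, Matrix.cons_val_one, Matrix.head_cons, Fin.mk_lt_mk,
      Matrix.cons_val_two, Matrix.cons_val_three, Matrix.tail_cons] at hxy ⊢ <;>
    first
      | omega
      | exact h12 | exact h23 | exact h34
      | exact h12.trans h23 | exact h23.trans h34 | exact (h12.trans h23).trans h34

lemma contains4 {n : ℕ} (σ : Fin 4 → Fin 4) (τ : Fin n → Fin n) (p1 p2 p3 p4 : Fin n)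
    (h12 : (p1:ℕ) < p2) (h23 : (p2:ℕ) < p3) (h34 : (p3:ℕ) < p4)
    (hval : ∀ a b : Fin 4, σ a < σ b ↔ τ (![p1,p2,p3,p4] a) < τ (![p1,p2,p3,p4] b)) :
    Contains τ σ :=
  ⟨![p1,p2,p3,p4], strictMono_vec4 (Fin.lt_def.mpr h12) (Fin.lt_def.mpr h23)
      (Fin.lt_def.mpr h34), hval⟩

lemma contains3412_of {n : ℕ} (τ : Fin n → Fin n) (p1 p2 p3 p4 : Fin n)
    (h12 : (p1:ℕ) < p2) (h23 : (p2:ℕ) < p3) (h34 : (p3:ℕ) < p4)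
    (hv1 : (τ p3:ℕ) < τ p4) (hv2 : (τ p4:ℕ) < τ p1) (hv3 : (τ p1:ℕ) < τ p2) :
    Contains τ pat3412 := by
  refine contains4 pat3412 τ p1 p2 p3 p4 h12 h23 h34 ?_
  intro a b
  rcases fin4cases a with rfl|rfl|rfl|rfl <;> rcases fin4cases b with rfl|rfl|rfl|rfl <;>
    simp only [pat3412, Matrix.cons_val_zero, Matrix.cons_val_one, Matrix.head_cons,
      Matrix.cons_val_two, Matrix.tail_cons, Matrix.cons_val_three] <;>
    constructor <;> intro h <;>
    first
      | exact absurd h (by decide)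
      | exact Fin.lt_def.mpr (by omega)
      | exact absurd (Fin.lt_def.mp h) (by omega)

lemma contains2413_of {n : ℕ} (τ : Fin n → Fin n) (p1 p2 p3 p4 : Fin n)
    (h12 : (p1:ℕ) < p2) (h23 : (p2:ℕ) < p3) (h34 : (p3:ℕ) < p4)
    (hv1 : (τ p3:ℕ) < τ p1) (hv2 : (τ p1:ℕ) < τ p4) (hv3 : (τ p4:ℕ) < τ p2) :
    Contains τ pat2413 := by
  refine contains4 pat2413 τ p1 p2 p3 p4 h12 h23 h34 ?_
  intro a b
  rcases fin4cases a with rfl|rfl|rfl|rfl <;> rcases fin4cases b with rfl|rfl|rfl|rfl <;>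
    simp only [pat2413, Matrix.cons_val_zero, Matrix.cons_val_one, Matrix.head_cons,
      Matrix.cons_val_two, Matrix.tail_cons, Matrix.cons_val_three] <;>
    constructor <;> intro h <;>
    first
      | exact absurd h (by decide)
      | exact Fin.lt_def.mpr (by omega)
      | exact absurd (Fin.lt_def.mp h) (by omega)

lemma contains3142_of {n : ℕ} (τ : Fin n → Fin n) (p1 p2 p3 p4 : Fin n)
    (h12 : (p1:ℕ) < p2) (h23 : (p2:ℕ) < p3) (h34 : (p3:ℕ) < p4)
    (hv1 : (τ p2:ℕ) < τ p4) (hv2 : (τ p4:ℕ) < τ p1) (hv3 : (τ p1:ℕ) < τ p3) :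
    Contains τ pat3142 := by
  refine contains4 pat3142 τ p1 p2 p3 p4 h12 h23 h34 ?_
  intro a b
  rcases fin4cases a with rfl|rfl|rfl|rfl <;> rcases fin4cases b with rfl|rfl|rfl|rfl <;>
    simp only [pat3142, Matrix.cons_val_zero, Matrix.cons_val_one, Matrix.head_cons,
      Matrix.cons_val_two, Matrix.tail_cons, Matrix.cons_val_three] <;>
    constructor <;> intro h <;>
    first
      | exact absurd h (by decide)
      | exact Fin.lt_def.mpr (by omega)
      | exact absurd (Fin.lt_def.mp h) (by omega)

lemma contains_trans {n m k : ℕ} {τ : Fin n → Fin n} {π : Fin m → Fin m} {σ : Fin k → Fin k}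
    (h1 : Contains τ π) (h2 : Contains π σ) : Contains τ σ := by
  obtain ⟨f, hf, hfv⟩ := h1
  obtain ⟨g, hg, hgv⟩ := h2
  exact ⟨f ∘ g, hf.comp hg, fun a b => (hgv a b).trans (hfv (g a) (g b))⟩

lemma extract2413 {n : ℕ} {τ : Fin n → Fin n} (h : Contains τ pat2413) :
    ∃ p1 p2 p3 p4 : Fin n, (p1:ℕ) < p2 ∧ (p2:ℕ) < p3 ∧ (p3:ℕ) < p4 ∧
      (τ p3:ℕ) < τ p1 ∧ (τ p1:ℕ) < τ p4 ∧ (τ p4:ℕ) < τ p2 := by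
  obtain ⟨f, hf, hfv⟩ := h
  exact ⟨f 0, f 1, f 2, f 3, Fin.lt_def.mp (hf (by decide)), Fin.lt_def.mp (hf (by decide)),
    Fin.lt_def.mp (hf (by decide)),
    Fin.lt_def.mp ((hfv 2 0).mp (by decide)), Fin.lt_def.mp ((hfv 0 3).mp (by decide)),
    Fin.lt_def.mp ((hfv 3 1).mp (by decide))⟩

lemma extract3142 {n : ℕ} {τ : Fin n → Fin n} (h : Contains τ pat3142) :
    ∃ p1 p2 p3 p4 : Fin n, (p1:ℕ) < p2 ∧ (p2:ℕ) < p3 ∧ (p3:ℕ) < p4 ∧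
      (τ p2:ℕ) < τ p4 ∧ (τ p4:ℕ) < τ p1 ∧ (τ p1:ℕ) < τ p3 := by
  obtain ⟨f, hf, hfv⟩ := h
  exact ⟨f 0, f 1, f 2, f 3, Fin.lt_def.mp (hf (by decide)), Fin.lt_def.mp (hf (by decide)),
    Fin.lt_def.mp (hf (by decide)),
    Fin.lt_def.mp ((hfv 1 3).mp (by decide)), Fin.lt_def.mp ((hfv 3 0).mp (by decide)),
    Fin.lt_def.mp ((hfv 0 2).mp (by decide))⟩

lemma extractπ {n m : ℕ} {τ : Fin n → Fin n} {π : Fin m → Fin m} (h : Contains τ π) :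
    ∃ f : Fin m → Fin n, StrictMono f ∧ ∀ a b : Fin m, π a < π b ↔ τ (f a) < τ (f b) := h

/-- Core combinatorial lemma: an involution containing a 2413-shaped configuration
(positions i<j<k<l, values τk < τi < τl < τj) contains 3412. -/
lemma inv_core {n : ℕ} (τ : Fin n → Fin n) (hτ : Function.Involutive τ)
    (i j k l : Fin n) (hij : (i:ℕ) < j) (hjk : (j:ℕ) < k) (hkl : (k:ℕ) < l)
    (hki : (τ k:ℕ) < τ i) (hil : (τ i:ℕ) < τ l) (hlj : (τ l:ℕ) < τ j) :
    Contains τ pat3412 := by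
  have hi : τ (τ i) = i := hτ i
  have hj : τ (τ j) = j := hτ j
  have hk : τ (τ k) = k := hτ k
  have hl : τ (τ l) = l := hτ l
  have hi' : (τ (τ i) : ℕ) = i := by rw [hi]
  have hj' : (τ (τ j) : ℕ) = j := by rw [hj]
  have hk' : (τ (τ k) : ℕ) = k := by rw [hk]
  have hl' : (τ (τ l) : ℕ) = l := by rw [hl]
  rcases lt_trichotomy ((i:ℕ)) ((τ k : ℕ)) with h1 | h1 | h1
  · -- i < a
    rcases lt_trichotomy ((j:ℕ)) ((τ k : ℕ)) with h2 | h2 | h2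
    · -- j < a : (P,Q,p,q) = (i, j, τi, τj)
      exact contains3412_of τ i j (τ i) (τ j) (by omega) (by omega) (by omega)
        (by omega) (by omega) (by omega)
    · -- j = a : derive τ j = k hence (τ j:ℕ)=k ; leaf (P,k',p,q) = (i, τk, τi, τj)
      have e : j = τ k := Fin.val_injective h2
      have e2 : (τ j : ℕ) = k := by rw [e, hk]
      exact contains3412_of τ i (τ k) (τ i) (τ j) (by omega) (by omega) (by omega)
        (by omega) (by omega) (by omega)
    · -- j > a
      rcases lt_trichotomy ((l:ℕ)) ((τ j : ℕ)) with h3 | h3 | h3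
      · -- l < d : (k',Q,K,q) = (τk, j, k, τj)
        refine contains3412_of τ (τ k) j k (τ j) (by omega) (by omega) (by omega) ?_ ?_ ?_ <;>
          (try simp only [hi', hj', hk', hl']) <;> omega
      · -- l = d : derive τ l = j : leaf (P,k',p,K) = (i, τk, τi, k)
        have e : l = τ j := Fin.val_injective h3
        have e2 : (τ l : ℕ) = j := by rw [e, hj]
        refine contains3412_of τ i (τ k) (τ i) k (by omega) (by omega) (by omega) ?_ ?_ ?_ <;>
          (try simp only [hi', hj', hk', hl']) <;> omega
      · -- l > d
        rcases lt_trichotomy ((j:ℕ)) ((τ j : ℕ)) with h4 | h4 | h4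
        · -- j < d
          rcases lt_trichotomy ((j:ℕ)) ((τ i : ℕ)) with h5 | h5 | h5
          · -- j < b : (P,Q,p,q)
            exact contains3412_of τ i j (τ i) (τ j) (by omega) (by omega) (by omega)
              (by omega) (by omega) (by omega)
          · -- j = b : impossible (τ j = i)
            have e : j = τ i := Fin.val_injective h5
            have e2 : (τ j : ℕ) = i := by rw [e, hi]
            omega
          · -- j > b : (P,k',p,K)
            refine contains3412_of τ i (τ k) (τ i) k (by omega) (by omega) (by omega)
              ?_ ?_ ?_ <;> (try simp only [hi', hj', hk', hl']) <;> omega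
        · -- j = d
          have e : j = τ j := Fin.val_injective h4
          refine contains3412_of τ i (τ k) (τ i) k (by omega) (by omega) (by omega)
            ?_ ?_ ?_ <;> (try simp only [hi', hj', hk', hl']) <;> omega
        · -- j > d
          refine contains3412_of τ i (τ k) (τ i) k (by omega) (by omega) (by omega)
            ?_ ?_ ?_ <;> (try simp only [hi', hj', hk', hl']) <;> omega
  · -- i = a : derive τ i = k ; leaf (k',Q,p,q) = (τk, j, τi, τj)
    have e : i = τ k := Fin.val_injective h1
    have e2 : (τ i : ℕ) = k := by rw [e, hk]
    refine contains3412_of τ (τ k) j (τ i) (τ j) (by omega) (by omega) (by omega)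
      ?_ ?_ ?_ <;> (try simp only [hi', hj', hk', hl']) <;> omega
  · -- i > a
    rcases lt_trichotomy ((l:ℕ)) ((τ j : ℕ)) with h2 | h2 | h2
    · -- l < d : (k',Q,K,q) = (τk, j, k, τj)
      refine contains3412_of τ (τ k) j k (τ j) (by omega) (by omega) (by omega)
        ?_ ?_ ?_ <;> (try simp only [hi', hj', hk', hl']) <;> omega
    · -- l = d : τ l = j ; leaf (k',l',K,q) = (τk, τl, k, τj)
      have e : l = τ j := Fin.val_injective h2
      have e2 : (τ l : ℕ) = j := by rw [e, hj]
      refine contains3412_of τ (τ k) (τ l) k (τ j) (by omega) (by omega) (by omega)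
        ?_ ?_ ?_ <;> (try simp only [hi', hj', hk', hl']) <;> omega
    · -- l > d
      rcases lt_trichotomy ((j:ℕ)) ((τ j : ℕ)) with h3 | h3 | h3
      · -- j < d
        rcases lt_trichotomy ((j:ℕ)) ((τ l : ℕ)) with h4 | h4 | h4
        · -- j < c : (Q,l',q,L) = (j, τl, τj, l)
          refine contains3412_of τ j (τ l) (τ j) l (by omega) (by omega) (by omega)
            ?_ ?_ ?_ <;> (try simp only [hi', hj', hk', hl']) <;> omega
        · -- j = c : impossible since then τ j = l, i.e. d = l, contradicting l > d
          have e : j = τ l := Fin.val_injective h4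
          have e2 : (τ j : ℕ) = l := by rw [e, hl]
          omega
        · -- j > c : (k',l',K,L) = (τk, τl, k, l)
          refine contains3412_of τ (τ k) (τ l) k l (by omega) (by omega) (by omega)
            ?_ ?_ ?_ <;> (try simp only [hi', hj', hk', hl']) <;> omega
      · -- j = d
        have e : j = τ j := Fin.val_injective h3
        refine contains3412_of τ (τ k) (τ l) k l (by omega) (by omega) (by omega)
          ?_ ?_ ?_ <;> (try simp only [hi', hj', hk', hl']) <;> omega
      · -- j > d
        refine contains3412_of τ (τ k) (τ l) k l (by omega) (by omega) (by omega)
          ?_ ?_ ?_ <;> (try simp only [hi', hj', hk', hl']) <;> omega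

/-- An involution avoiding 3412 avoids 2413. -/
lemma avoid2413 {n : ℕ} {τ : Fin n → Fin n} (hτ : Function.Involutive τ)
    (hav : Avoids τ pat3412) : Avoids τ pat2413 := by
  intro hc
  obtain ⟨p1, p2, p3, p4, a12, a23, a34, v1, v2, v3⟩ := extract2413 hc
  exact hav (inv_core τ hτ p1 p2 p3 p4 a12 a23 a34 v1 v2 v3)

/-- An involution avoiding 3412 avoids 3142. -/
lemma avoid3142 {n : ℕ} {τ : Fin n → Fin n} (hτ : Function.Involutive τ)
    (hav : Avoids τ pat3412) : Avoids τ pat3142 := by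
  intro hc
  obtain ⟨p1, p2, p3, p4, a12, a23, a34, v1, v2, v3⟩ := extract3142 hc
  -- use positions (τ p2, τ p4, τ p1, τ p3) as (i,j,k,l)
  refine hav (inv_core τ hτ (τ p2) (τ p4) (τ p1) (τ p3) v1 v2 v3 ?_ ?_ ?_) <;>
    simp only [hτ p1, hτ p2, hτ p3, hτ p4] <;> omega

/-- Decomposition lemma: an injective sequence on a window `[0,e)` avoiding 2413 and 3142
has a sum cut or a skew cut. -/
lemma lemD (f : ℕ → ℕ) : ∀ e, 2 ≤ e →
    (∀ x y, x < e → y < e → x ≠ y → f x ≠ f y) →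
    (∀ p1 p2 p3 p4, p1 < p2 → p2 < p3 → p3 < p4 → p4 < e →
        ¬(f p3 < f p1 ∧ f p1 < f p4 ∧ f p4 < f p2)) →
    (∀ p1 p2 p3 p4, p1 < p2 → p2 < p3 → p3 < p4 → p4 < e →
        ¬(f p2 < f p4 ∧ f p4 < f p1 ∧ f p1 < f p3)) →
    ∃ j, 1 ≤ j ∧ j < e ∧
      ((∀ x y, x < j → j ≤ y → y < e → f x < f y) ∨
       (∀ x y, x < j → j ≤ y → y < e → f y < f x)) := by
  intro e he
  induction e, he using Nat.le_induction with
  | base =>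
    intro hinj _ _
    refine ⟨1, le_refl 1, by omega, ?_⟩
    have h01 : f 0 ≠ f 1 := hinj 0 1 (by omega) (by omega) (by omega)
    rcases lt_or_gt_of_ne h01 with h | h
    · left; intro x y hx hy hye; interval_cases x <;> interval_cases y <;> assumption
    · right; intro x y hx hy hye; interval_cases x <;> interval_cases y <;> assumption
  | succ e he IH =>
    intro hinj h2413 h3142
    have hinj' : ∀ x y, x < e → y < e → x ≠ y → f x ≠ f y := fun x y hx hy =>
      hinj x y (by omega) (by omega)
    obtain ⟨j', hj1, hj2, hcut⟩ := IH hinj'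
      (fun p1 p2 p3 p4 a b c d => h2413 p1 p2 p3 p4 a b c (by omega))
      (fun p1 p2 p3 p4 a b c d => h3142 p1 p2 p3 p4 a b c (by omega))
    -- w := f e
    rcases hcut with hsum | hskew
    · -- sum cut for the window [0,e)
      by_cases hall : ∀ x, x < j' → f x < f e
      · -- extendable sum cut
        refine ⟨j', hj1, by omega, Or.inl ?_⟩
        intro x y hx hy hye
        rcases eq_or_lt_of_le (show y ≤ e by omega) with h | h
        · rw [h]; exact hall x hx
        · exact hsum x y hx hy h
      · push_neg at hall
        obtain ⟨i0, hi0, hi0w⟩ := hall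
        have hi0w' : f e < f i0 := by
          rcases lt_or_gt_of_ne (hinj i0 e (by omega) (by omega) (by omega)) with h | h
          · omega
          · exact h
        by_cases hall2 : ∀ x, x < j' → f e < f x
        · -- skew cut at e
          refine ⟨e, by omega, by omega, Or.inr ?_⟩
          intro x y hx hy hye
          have hye' : y = e := by omega
          subst hye'
          rcases lt_or_ge x j' with h | h
          · exact hall2 x h
          · exact lt_trans hi0w' (hsum i0 x hi0 h (by omega))
        · push_neg at hall2
          obtain ⟨i2', hi2', hi2w⟩ := hall2
          have hi2w' : f i2' < f e := by
            rcases lt_or_gt_of_ne (hinj i2' e (by omega) (by omega) (by omega)) with h | h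
            · exact h
            · omega
          -- i1 : least index < j' with f i1 > f e
          have hex : ∃ t, t < j' ∧ f e < f t := ⟨i0, hi0, hi0w'⟩
          classical
          set i1 := Nat.find hex with hi1def
          obtain ⟨hi1j, hi1w⟩ := Nat.find_spec hex
          by_cases hmid : ∃ t, i1 < t ∧ t < j' ∧ f t < f e
          · -- 3142 pattern at (i1, t, j', e)
            obtain ⟨t, ht1, ht2, ht3⟩ := hmid
            exact absurd ⟨ht3, hi1w, hsum i1 j' hi1j (le_refl _) (by omega)⟩
              (h3142 i1 t j' e ht1 ht2 (by omega) (by omega))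
          · push_neg at hmid
            -- all below i1 are < f e, all in [i1, j') are > f e; sum cut at i1
            have hlow : ∀ x, x < i1 → f x < f e := by
              intro x hx
              have := Nat.find_min hex hx
              push_neg at this
              have hne : f x ≠ f e := hinj x e (by omega) (by omega) (by omega)
              have := this (by omega)
              omega
            have hhigh : ∀ x, i1 ≤ x → x < j' → f e < f x := by
              intro x hx1 hx2
              rcases eq_or_lt_of_le hx1 with h | h
              · subst h; exact hi1w
              · have hne : f x ≠ f e := hinj x e (by omega) (by omega) (by omega)
                have := hmid x h hx2
                omega
            have hi1pos : 1 ≤ i1 := by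
              by_contra h
              have : i1 = 0 := by omega
              have := hhigh i2' (by omega) hi2'
              omega
            refine ⟨i1, hi1pos, by omega, Or.inl ?_⟩
            intro x y hx hy hye
            have hfx : f x < f e := hlow x hx
            rcases lt_or_ge y j' with h | h
            · exact lt_trans hfx (hhigh y hy h)
            · rcases eq_or_lt_of_le (by omega : y ≤ e) with h' | h'
              · rw [h']; exact hfx
              · exact hsum x y (by omega) (by omega) (by omega)
    · -- skew cut for the window [0,e) (mirror)
      by_cases hall : ∀ x, x < j' → f e < f x
      · refine ⟨j', hj1, by omega, Or.inr ?_⟩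
        intro x y hx hy hye
        rcases eq_or_lt_of_le (by omega : y ≤ e) with h | h
        · rw [h]; exact hall x hx
        · exact hskew x y hx hy (by omega)
      · push_neg at hall
        obtain ⟨i0, hi0, hi0w⟩ := hall
        have hi0w' : f i0 < f e := by
          rcases lt_or_gt_of_ne (hinj i0 e (by omega) (by omega) (by omega)) with h | h
          · exact h
          · omega
        by_cases hall2 : ∀ x, x < j' → f x < f e
        · -- sum cut at e
          refine ⟨e, by omega, by omega, Or.inl ?_⟩
          intro x y hx hy hye
          have hye' : y = e := by omega
          subst hye'
          rcases lt_or_ge x j' with h | h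
          · exact hall2 x h
          · exact lt_trans (hskew i0 x hi0 h (by omega)) hi0w'
        · push_neg at hall2
          obtain ⟨i2', hi2', hi2w⟩ := hall2
          have hi2w' : f e < f i2' := by
            rcases lt_or_gt_of_ne (hinj i2' e (by omega) (by omega) (by omega)) with h | h
            · omega
            · exact h
          have hex : ∃ t, t < j' ∧ f t < f e := ⟨i0, hi0, hi0w'⟩
          classical
          set i1 := Nat.find hex with hi1def
          obtain ⟨hi1j, hi1w⟩ := Nat.find_spec hex
          by_cases hmid : ∃ t, i1 < t ∧ t < j' ∧ f e < f t
          · -- 2413 pattern at (i1, t, j', e)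
            obtain ⟨t, ht1, ht2, ht3⟩ := hmid
            exact absurd ⟨hskew i1 j' hi1j (le_refl _) (by omega), hi1w, ht3⟩
              (h2413 i1 t j' e ht1 ht2 (by omega) (by omega))
          · push_neg at hmid
            have hlow : ∀ x, x < i1 → f e < f x := by
              intro x hx
              have := Nat.find_min hex hx
              push_neg at this
              have hne : f x ≠ f e := hinj x e (by omega) (by omega) (by omega)
              have := this (by omega)
              omega
            have hhigh : ∀ x, i1 ≤ x → x < j' → f x < f e := by
              intro x hx1 hx2
              rcases eq_or_lt_of_le hx1 with h | h
              · subst h; exact hi1w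
              · have hne : f x ≠ f e := hinj x e (by omega) (by omega) (by omega)
                have := hmid x h hx2
                omega
            have hi1pos : 1 ≤ i1 := by
              by_contra h
              have : i1 = 0 := by omega
              have := hhigh i2' (by omega) hi2'
              omega
            refine ⟨i1, hi1pos, by omega, Or.inr ?_⟩
            intro x y hx hy hye
            have hfx : f e < f x := hlow x hx
            rcases lt_or_ge y j' with h | h
            · exact lt_trans (hhigh y hy h) hfx
            · rcases eq_or_lt_of_le (by omega : y ≤ e) with h' | h'
              · rw [h']; exact hfx
              · exact hskew x y (by omega) (by omega) (by omega)

set_option maxHeartbeats 2000000 in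
/-- Part A: a complete permutation with the endpoint conditions contains 2413, 3142 or 3412. -/
lemma partA (m : ℕ) (hm : 2 ≤ m) (π : Fin m → Fin m) (hbij : Function.Bijective π)
    (hcomplete : ¬ ∃ j : ℕ, 1 ≤ j ∧ j < m ∧ ∀ i : Fin m, (i : ℕ) < j → (π i : ℕ) < j)
    (hfirst : (π ⟨0, Nat.zero_lt_of_lt hm⟩ : ℕ) ≠ m - 1)
    (hlast : (π ⟨m - 1, Nat.sub_one_lt_of_lt hm⟩ : ℕ) ≠ 0) :
    Contains π pat2413 ∨ Contains π pat3142 ∨ Contains π pat3412 := by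
  classical
  by_contra hcon
  push_neg at hcon
  obtain ⟨hc2413, hc3142, hc3412⟩ := hcon
  set F : ℕ → ℕ := fun x => if h : x < m then ((π ⟨x, h⟩ : ℕ)) else 0 with hFdef
  have hFval : ∀ (x : ℕ) (h : x < m), F x = (π ⟨x, h⟩ : ℕ) := by
    intro x h; simp only [hFdef]; rw [dif_pos h]
  have hFv : ∀ i : Fin m, F (i : ℕ) = (π i : ℕ) := by
    intro i; rw [hFval _ i.2, Fin.eta]
  have Hinj : ∀ x y, x < m → y < m → x ≠ y → F x ≠ F y := by
    intro x y hx hy hxy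
    rw [hFval x hx, hFval y hy]
    intro hfeq
    have : (⟨x, hx⟩ : Fin m) = ⟨y, hy⟩ := hbij.injective (Fin.val_injective hfeq)
    exact hxy (congrArg Fin.val this)
  have H2413 : ∀ p1 p2 p3 p4, p1 < p2 → p2 < p3 → p3 < p4 → p4 < m →
      ¬(F p3 < F p1 ∧ F p1 < F p4 ∧ F p4 < F p2) := by
    intro p1 p2 p3 p4 h12 h23 h34 h4 ⟨v1, v2, v3⟩
    simp only [hFval p1 (by omega : p1 < m), hFval p2 (by omega : p2 < m),
      hFval p3 (by omega : p3 < m), hFval p4 h4] at v1 v2 v3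
    exact hc2413 (contains2413_of π ⟨p1, by omega⟩ ⟨p2, by omega⟩ ⟨p3, by omega⟩ ⟨p4, h4⟩
      h12 h23 h34 v1 v2 v3)
  have H3142 : ∀ p1 p2 p3 p4, p1 < p2 → p2 < p3 → p3 < p4 → p4 < m →
      ¬(F p2 < F p4 ∧ F p4 < F p1 ∧ F p1 < F p3) := by
    intro p1 p2 p3 p4 h12 h23 h34 h4 ⟨v1, v2, v3⟩
    simp only [hFval p1 (by omega : p1 < m), hFval p2 (by omega : p2 < m),
      hFval p3 (by omega : p3 < m), hFval p4 h4] at v1 v2 v3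
    exact hc3142 (contains3142_of π ⟨p1, by omega⟩ ⟨p2, by omega⟩ ⟨p3, by omega⟩ ⟨p4, h4⟩
      h12 h23 h34 v1 v2 v3)
  -- a relative sum cut contradicts completeness
  have nosum : ∀ j, 1 ≤ j → j < m → ¬(∀ x y, x < j → j ≤ y → y < m → F x < F y) := by
    intro j hj1 hjm hcut
    refine hcomplete ⟨j, hj1, hjm, ?_⟩
    intro i hi
    by_contra hge
    push_neg at hge
    -- pigeonhole: preimages of values < j all lie below j, missing position i
    have hpre : ∀ v : Fin j, ((Equiv.ofBijective π hbij).symm ⟨(v:ℕ), by omega⟩ : ℕ) < j := by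
      intro v
      by_contra hx
      push_neg at hx
      set x := (Equiv.ofBijective π hbij).symm ⟨(v:ℕ), by omega⟩ with hxdef
      have hπx : π x = ⟨(v:ℕ), by omega⟩ := (Equiv.ofBijective π hbij).apply_symm_apply _
      have h1 : F (i:ℕ) < F (x:ℕ) := hcut _ _ hi hx x.2
      rw [hFv i, hFv x, hπx] at h1
      have h2 : ((⟨(v:ℕ), by omega⟩ : Fin m) : ℕ) = (v:ℕ) := rfl
      omega
    set u : Fin j → Fin j := fun v =>
      ⟨((Equiv.ofBijective π hbij).symm ⟨(v:ℕ), by omega⟩ : ℕ), hpre v⟩ with hudef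
    have huinj : Function.Injective u := by
      intro a b hab
      simp only [hudef, Fin.mk.injEq] at hab
      have h2 := (Equiv.ofBijective π hbij).symm.injective (Fin.val_injective hab)
      rw [Fin.mk.injEq] at h2
      exact Fin.val_injective h2
    have husurj := Finite.surjective_of_injective huinj
    obtain ⟨v, hv⟩ := husurj ⟨(i:ℕ), hi⟩
    simp only [hudef, Fin.mk.injEq] at hv
    have heq : (Equiv.ofBijective π hbij).symm ⟨(v:ℕ), by omega⟩ = i :=
      Fin.val_injective hv
    have h4 : π ((Equiv.ofBijective π hbij).symm ⟨(v:ℕ), by omega⟩) = ⟨(v:ℕ), by omega⟩ :=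
      (Equiv.ofBijective π hbij).apply_symm_apply _
    rw [heq] at h4
    have h5 : (π i : ℕ) = (v : ℕ) := by rw [h4]
    omega
  obtain ⟨j0, hj01, hj0m, hcut0⟩ := lemD F m hm Hinj H2413 H3142
  have hskewex : ∃ c, 1 ≤ c ∧ c < m ∧ ∀ x y, x < c → c ≤ y → y < m → F y < F x := by
    rcases hcut0 with h | h
    · exact absurd h (nosum j0 hj01 hj0m)
    · exact ⟨j0, hj01, hj0m, h⟩
  have hcspec := Nat.find_spec hskewex
  have hcmin : ∀ k, k < Nat.find hskewex →
      ¬(1 ≤ k ∧ k < m ∧ ∀ x y, x < k → k ≤ y → y < m → F y < F x) :=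
    fun k hk => Nat.find_min hskewex hk
  generalize hgen : Nat.find hskewex = c at hcspec hcmin
  clear hgen hskewex hcut0
  obtain ⟨hc1, hcm, hccut⟩ := hcspec
  rcases eq_or_lt_of_le hc1 with hc1' | hc2
  · -- c = 1 : π 0 is the maximum, contradicting hfirst
    have hmax : ∀ x : Fin m, 1 ≤ (x:ℕ) → (π x : ℕ) < (π ⟨0, by omega⟩ : ℕ) := by
      intro x hx
      have := hccut 0 (x:ℕ) (by omega) (by omega) x.2
      rw [hFv x] at this
      rw [hFval 0 (by omega)] at this
      exact this
    obtain ⟨y, hy⟩ := hbij.surjective ⟨m-1, by omega⟩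
    have hyv : (π y : ℕ) = m - 1 := by rw [hy]
    rcases Nat.eq_zero_or_pos (y : ℕ) with h0 | h0
    · have : y = ⟨0, by omega⟩ := Fin.val_injective h0
      rw [this] at hyv
      exact hfirst hyv
    · have h1 := hmax y h0
      have h2 : (π ⟨0, by omega⟩ : ℕ) < m := (π _).2
      omega
  · -- c ≥ 2 : decompose the top window [0, c)
    obtain ⟨j, hj1, hjc, hwcut⟩ := lemD F c hc2 (fun x y hx hy => Hinj x y (by omega) (by omega))
      (fun p1 p2 p3 p4 a b cc d => H2413 p1 p2 p3 p4 a b cc (by omega))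
      (fun p1 p2 p3 p4 a b cc d => H3142 p1 p2 p3 p4 a b cc (by omega))
    rcases hwcut with hwsum | hwskew
    · -- window sum cut; look at the suffix [c, m)
      have h0j : F 0 < F j := hwsum 0 j (by omega) (le_refl _) hjc
      by_cases hasc : ∃ x y, c ≤ x ∧ x < y ∧ y < m ∧ F x < F y
      · obtain ⟨x, y, hx, hxy, hym, hfxy⟩ := hasc
        have hv1 : (π ⟨x, by omega⟩ : ℕ) < (π ⟨y, hym⟩ : ℕ) := by
          rw [hFval x (by omega : x < m), hFval y hym] at hfxy; exact hfxy
        have hv2 : (π ⟨y, hym⟩ : ℕ) < (π ⟨0, by omega⟩ : ℕ) := by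
          have := hccut 0 y (by omega) (by omega) hym
          rw [hFval 0 (by omega : 0 < m), hFval y hym] at this; exact this
        have hv3 : (π ⟨0, by omega⟩ : ℕ) < (π ⟨j, by omega⟩ : ℕ) := by
          have := h0j
          rw [hFval 0 (by omega : 0 < m), hFval j (by omega : j < m)] at this; exact this
        exact hc3412 (contains3412_of π ⟨0, by omega⟩ ⟨j, by omega⟩ ⟨x, by omega⟩ ⟨y, hym⟩
          (show (0:ℕ) < j by omega) (show j < x by omega) (show x < y by omega) hv1 hv2 hv3)
      · push_neg at hasc
        -- suffix decreasing: π (m-1) is the minimum, contradicting hlast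
        have hmin : ∀ x : Fin m, (x:ℕ) ≠ m - 1 → (π ⟨m-1, by omega⟩ : ℕ) < (π x : ℕ) := by
          intro x hx
          have hres : F (m-1) < F (x:ℕ) := by
            rcases lt_or_ge (x:ℕ) c with h | h
            · exact hccut (x:ℕ) (m-1) h (by omega) (by omega)
            · have h1 := hasc (x:ℕ) (m-1) h (by omega) (by omega)
              have h2 := Hinj (x:ℕ) (m-1) x.2 (by omega) hx
              omega
          rw [hFv x] at hres
          rw [hFval (m-1) (by omega)] at hres
          exact hres
        obtain ⟨y, hy⟩ := hbij.surjective ⟨0, by omega⟩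
        have hyv : (π y : ℕ) = 0 := by rw [hy]
        rcases eq_or_ne ((y:ℕ)) (m-1) with h0 | h0
        · have : y = ⟨m-1, by omega⟩ := Fin.val_injective h0
          rw [this] at hyv
          exact hlast hyv
        · have h1 := hmin y h0
          omega
    · -- window skew cut extends to a global skew cut below c : contradicts minimality
      have : ∀ x y, x < j → j ≤ y → y < m → F y < F x := by
        intro x y hx hy hym
        rcases lt_or_ge y c with h | h
        · exact hwskew x y hx hy h
        · exact hccut x y (by omega) h hym
      exact absurd (⟨hj1, by omega, this⟩ :
        1 ≤ j ∧ j < m ∧ ∀ x y, x < j → j ≤ y → y < m → F y < F x)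
        (hcmin j (by omega))

/-- if `π` is a complete permutation of length `m ≥ 2` (no proper initial
segment of length `j` consists of `{1, …, j}`) with first entry different from `m` and last
entry different from `1`, then `I_n(3412, π) = I_n(3412)` for all `n`. -/
theorem stmt16 (m : ℕ) (hm : 2 ≤ m) (π : Fin m → Fin m) (hbij : Function.Bijective π)
    (hcomplete : ¬ ∃ j : ℕ, 1 ≤ j ∧ j < m ∧ ∀ i : Fin m, (i : ℕ) < j → (π i : ℕ) < j)
    (hfirst : (π ⟨0, by omega⟩ : ℕ) ≠ m - 1)
    (hlast : (π ⟨m - 1, by omega⟩ : ℕ) ≠ 0) :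
    ∀ n : ℕ,
      {τ : Fin n → Fin n |
        Function.Involutive τ ∧ Avoids τ pat3412 ∧ Avoids τ π} =
      {τ : Fin n → Fin n | Function.Involutive τ ∧ Avoids τ pat3412} := by
  intro n
  ext τ
  simp only [Set.mem_setOf_eq]
  constructor
  · rintro ⟨h1, h2, _⟩; exact ⟨h1, h2⟩
  · rintro ⟨h1, h2⟩
    refine ⟨h1, h2, ?_⟩
    intro hcπ
    rcases partA m hm π hbij hcomplete hfirst hlast with h | h | h
    · exact avoid2413 h1 h2 (contains_trans hcπ h)
    · exact avoid3142 h1 h2 (contains_trans hcπ h)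
    · exact h2 (contains_trans hcπ h)
end
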